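/- Waning strata restriction. Assume, for a fixed a ∈ {0,1}, the hypotheses of the second-interval incidence decomposition (Consistency, Exposure necessity, Exclusion restriction, Treatment exchangeability, Positivity, Exposure exchangeability, Extended exposure exchangeability, 0 < P(E1[a]=1) < 1 and P(E1[a]=1, Y1[a,1]=0) > 0). Write q0 := P(E2[a,0]=1 | E1[a]=0), q1 := P(E2[a,1]=1 | E1[a]=1, Y1[a,1]=0), p0 := P(E1[a]=0), p1 := P(E1[a]=1), and assume q0·p0 + q1·p1 > 0. Then P(Y2[a,1]=1, Y1[a,1]=0) ≤ E[ΔY2 | A=a] / (q0·p0 + q1·p1). -/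

import Mathlib

open MeasureTheory ProbabilityTheory
open scoped ProbabilityTheory ENNReal

lemma cond_prod_toReal {Ω : Type*} [MeasurableSpace Ω] {μ : Measure Ω} [IsFiniteMeasure μ]
    {s t u : Set Ω} (hs : MeasurableSet s)
    (h : μ[|s] (t ∩ u) = μ[|s] t * μ[|s] u) :
    (μ (s ∩ (t ∩ u))).toReal * (μ s).toReal =
      (μ (s ∩ t)).toReal * (μ (s ∩ u)).toReal := by
  by_cases hz : μ s = 0
  · have h1 : μ (s ∩ (t ∩ u)) = 0 :=
      le_antisymm (hz ▸ measure_mono Set.inter_subset_left) (zero_le)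
    have h2 : μ (s ∩ t) = 0 :=
      le_antisymm (hz ▸ measure_mono Set.inter_subset_left) (zero_le)
    rw [h1, h2]; simp
  · rw [cond_apply hs, cond_apply hs, cond_apply hs] at h
    have hr := congrArg ENNReal.toReal h
    rw [ENNReal.toReal_mul, ENNReal.toReal_mul, ENNReal.toReal_mul, ENNReal.toReal_mul,
      ENNReal.toReal_inv] at hr
    have hsne : (μ s).toReal ≠ 0 := by
      simp [ENNReal.toReal_ne_zero, hz, measure_ne_top μ s]
    field_simp at hr
    exact mul_right_cancel₀ hsne (by linear_combination (μ s).toReal * hr)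

lemma waning_aux
    {Ω : Type*} [MeasurableSpace Ω] (μ : Measure Ω) [IsProbabilityMeasure μ]
    (E1 E2 DY1 DY2 e1 y1 e2n e2e y2 w : Ω → ℝ)
    (hDY2m : Measurable DY2)
    (he1m : Measurable e1) (hy1m : Measurable y1) (he2nm : Measurable e2n)
    (he2em : Measurable e2e) (hy2m : Measurable y2) (hwm : Measurable w)
    (hDY2r : ∀ ω, DY2 ω = 0 ∨ DY2 ω = 1)
    (he1r : ∀ ω, e1 ω = 0 ∨ e1 ω = 1)
    (Z : Set Ω) (hZm : MeasurableSet Z) (hZ0 : μ Z ≠ 0)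
    (hZind : ∀ T : Set (ℝ × ℝ × ℝ × ℝ × ℝ × ℝ), MeasurableSet T →
      μ (Z ∩ (fun ω => (e1 ω, y1 ω, e2n ω, e2e ω, y2 ω, w ω)) ⁻¹' T) =
        μ Z * μ ((fun ω => (e1 ω, y1 ω, e2n ω, e2e ω, y2 ω, w ω)) ⁻¹' T))
    (cons1 : ∀ᵐ ω ∂μ, ω ∈ Z → E1 ω = e1 ω)
    (cons2 : ∀ᵐ ω ∂μ, ω ∈ Z → E1 ω = 0 → E2 ω = e2n ω)
    (cons3 : ∀ᵐ ω ∂μ, ω ∈ Z → E1 ω = 1 → E2 ω = e2e ω)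
    (cons4 : ∀ᵐ ω ∂μ, ω ∈ Z → E1 ω = 1 → DY1 ω = y1 ω)
    (cons5 : ∀ᵐ ω ∂μ, ω ∈ Z → E1 ω = 0 → E2 ω = 1 → DY2 ω = y2 ω)
    (cons6 : ∀ᵐ ω ∂μ, ω ∈ Z → E1 ω = 1 → DY1 ω = 0 → E2 ω = 1 → DY2 ω = w ω)
    (hexcl' : ∀ᵐ ω ∂μ, w ω = y2 ω)
    (heeY1' : IndepFun e1 y1 μ)
    (hcond1 : IndepFun e1 y2 (μ[|{ω | e2n ω = 1}]))
    (hE2ind : IndepFun e2n y2 μ)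
    (hext1 : IndepFun e1 w (μ[|{ω | y1 ω = 0 ∧ e2e ω = 1}]))
    (hext2 : IndepFun e2e w (μ[|{ω | y1 ω = 0}]))
    (hp1pos : 0 < (μ {ω | e1 ω = 1}).toReal)
    (hp1lt : (μ {ω | e1 ω = 1}).toReal < 1)
    (hBpos : 0 < (μ {ω | e1 ω = 1 ∧ y1 ω = 0}).toReal)
    (q0 q1 p0 p1 : ℝ)
    (hq0 : q0 = ((μ[|{ω | e1 ω = 0}]) {ω | e2n ω = 1}).toReal)
    (hq1 : q1 = ((μ[|{ω | e1 ω = 1 ∧ y1 ω = 0}]) {ω | e2e ω = 1}).toReal)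
    (hp0 : p0 = (μ {ω | e1 ω = 0}).toReal)
    (hp1 : p1 = (μ {ω | e1 ω = 1}).toReal)
    (hden : 0 < q0 * p0 + q1 * p1) :
    (μ {ω | y2 ω = 1 ∧ y1 ω = 0}).toReal ≤
      (∫ ω, DY2 ω ∂(μ[|Z])) / (q0 * p0 + q1 * p1) := by
  classical
  set E10 := {ω | e1 ω = 0} with hE10def
  set E11 := {ω | e1 ω = 1} with hE11def
  set EN := {ω | e2n ω = 1} with hENdef
  set EE := {ω | e2e ω = 1} with hEEdef
  set C := {ω | y1 ω = 0} with hCdef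
  set Y21 := {ω | y2 ω = 1} with hY21def
  set W1 := {ω | w ω = 1} with hW1def
  have hE10m : MeasurableSet E10 := he1m (measurableSet_singleton 0)
  have hE11m : MeasurableSet E11 := he1m (measurableSet_singleton 1)
  have hENm : MeasurableSet EN := he2nm (measurableSet_singleton 1)
  have hEEm : MeasurableSet EE := he2em (measurableSet_singleton 1)
  have hCm : MeasurableSet C := hy1m (measurableSet_singleton 0)
  have hY21m : MeasurableSet Y21 := hy2m (measurableSet_singleton 1)
  have hW1m : MeasurableSet W1 := hwm (measurableSet_singleton 1)
  set t := (μ {ω | y2 ω = 1 ∧ y1 ω = 0}).toReal with htdef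
  have htnn : 0 ≤ t := ENNReal.toReal_nonneg
  -- p0 positivity and q0*p0 identity
  have hcompl : E10 = E11ᶜ := by
    ext ω; simp only [hE10def, hE11def, Set.mem_setOf_eq, Set.mem_compl_iff]
    rcases he1r ω with h | h <;> simp [h]
  have hp0' : p0 = 1 - (μ E11).toReal := by
    rw [hp0, hcompl, measure_compl hE11m (measure_ne_top μ _), measure_univ,
      ENNReal.toReal_sub_of_le prob_le_one (by simp)]
    simp
  have hp0pos : 0 < p0 := by rw [hp0']; rw [← hp1] at hp1lt; linarith
  have hE10ne : μ E10 ≠ 0 := by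
    intro h; rw [hp0, h] at hp0pos; simp at hp0pos
  have hq0p0 : q0 * p0 = (μ (E10 ∩ EN)).toReal := by
    rw [hq0, cond_apply hE10m, ENNReal.toReal_mul, ENNReal.toReal_inv, ← hp0]
    field_simp
  -- bound for stratum 0
  set S0 := E10 ∩ EN ∩ Y21 with hS0def
  have hS0m : MeasurableSet S0 := (hE10m.inter hENm).inter hY21m
  have ht1 : t ≤ (μ Y21).toReal := by
    apply ENNReal.toReal_mono (measure_ne_top μ _)
    exact measure_mono (fun ω h => h.1)
  have hS0bound : q0 * p0 * t ≤ (μ S0).toReal := by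
    by_cases hz : μ EN = 0
    · have h1 : μ (E10 ∩ EN) = 0 :=
        le_antisymm (hz ▸ measure_mono Set.inter_subset_right) (zero_le)
      have h2 : q0 * p0 = 0 := by rw [hq0p0, h1]; simp
      rw [h2]; simp [ENNReal.toReal_nonneg]
    · have heN : 0 < (μ EN).toReal := ENNReal.toReal_pos hz (measure_ne_top μ _)
      have h1 : μ[|EN] (E10 ∩ Y21) = μ[|EN] E10 * μ[|EN] Y21 :=
        hcond1.measure_inter_preimage_eq_mul {0} {1} (measurableSet_singleton 0)
          (measurableSet_singleton 1)
      have IH := cond_prod_toReal hENm h1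
      have h2 : μ (EN ∩ Y21) = μ EN * μ Y21 :=
        hE2ind.measure_inter_preimage_eq_mul {1} {1} (measurableSet_singleton 1)
          (measurableSet_singleton 1)
      have h2r := congrArg ENNReal.toReal h2
      rw [ENNReal.toReal_mul] at h2r
      have hs1 : EN ∩ (E10 ∩ Y21) = S0 := by
        ext ω; simp only [hS0def, Set.mem_inter_iff]; tauto
      have hs2 : EN ∩ E10 = E10 ∩ EN := Set.inter_comm _ _
      rw [hs1, hs2, h2r, ← hq0p0] at IH
      have hkey : (μ S0).toReal = q0 * p0 * (μ Y21).toReal := by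
        apply mul_right_cancel₀ (ne_of_gt heN)
        linear_combination IH
      rw [hkey]
      have hq0p0nn : 0 ≤ q0 * p0 := by rw [hq0p0]; exact ENNReal.toReal_nonneg
      exact mul_le_mul_of_nonneg_left ht1 hq0p0nn
  -- bound for stratum 1
  set S1 := E11 ∩ C ∩ EE ∩ W1 with hS1def
  have hS1m : MeasurableSet S1 := ((hE11m.inter hCm).inter hEEm).inter hW1m
  have hBset : {ω | e1 ω = 1 ∧ y1 ω = 0} = E11 ∩ C := rfl
  have hBm : MeasurableSet (E11 ∩ C) := hE11m.inter hCm
  rw [hBset] at hBpos hq1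
  have hBne : μ (E11 ∩ C) ≠ 0 := by
    intro h; rw [h] at hBpos; simp at hBpos
  have hc : 0 < (μ C).toReal := by
    refine lt_of_lt_of_le hBpos (ENNReal.toReal_mono (measure_ne_top μ _) ?_)
    exact measure_mono Set.inter_subset_right
  have hBr : (μ (E11 ∩ C)).toReal = p1 * (μ C).toReal := by
    have := heeY1'.measure_inter_preimage_eq_mul {1} {0} (measurableSet_singleton 1)
      (measurableSet_singleton 0)
    have h' := congrArg ENNReal.toReal this
    rw [ENNReal.toReal_mul] at h'
    rw [hp1]; exact h'
  have hq1' : q1 * (p1 * (μ C).toReal) = (μ (E11 ∩ C ∩ EE)).toReal := by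
    rw [hq1, cond_apply hBm, ENNReal.toReal_mul, ENNReal.toReal_inv, ← hBr]
    have hne : (μ (E11 ∩ C)).toReal ≠ 0 := ne_of_gt hBpos
    field_simp
  set D := C ∩ EE with hDdef
  have hDm : MeasurableSet D := hCm.inter hEEm
  have hDsub : E11 ∩ C ∩ EE ⊆ D := fun ω h => ⟨h.1.2, h.2⟩
  have htset : {ω | y2 ω = 1 ∧ y1 ω = 0} = C ∩ Y21 := by
    ext ω; simp only [hCdef, hY21def, Set.mem_setOf_eq, Set.mem_inter_iff]; tauto
  have hCW : μ (C ∩ W1) = μ {ω | y2 ω = 1 ∧ y1 ω = 0} := by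
    rw [htset]
    apply measure_congr
    rw [Filter.eventuallyEq_set]
    filter_upwards [hexcl'] with ω hw
    simp [Set.mem_inter_iff, hW1def, hY21def, hw, Set.mem_setOf_eq]
  have hS1bound : q1 * p1 * t ≤ (μ S1).toReal := by
    by_cases hd : μ D = 0
    · have h1 : μ (E11 ∩ C ∩ EE) = 0 := le_antisymm (hd ▸ measure_mono hDsub) (zero_le)
      have h2 : q1 * (p1 * (μ C).toReal) = 0 := by rw [hq1', h1]; simp
      have hq1z : q1 = 0 := by
        rcases mul_eq_zero.1 h2 with h | h
        · exact h
        · exfalso; nlinarith [hBr ▸ hBpos]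
      rw [hq1z]; simp [ENNReal.toReal_nonneg]
    · have hdpos : 0 < (μ D).toReal := ENNReal.toReal_pos hd (measure_ne_top μ _)
      have hDset : {ω | y1 ω = 0 ∧ e2e ω = 1} = D := rfl
      rw [hDset] at hext1
      have h1 : μ[|D] (E11 ∩ W1) = μ[|D] E11 * μ[|D] W1 :=
        hext1.measure_inter_preimage_eq_mul {1} {1} (measurableSet_singleton 1)
          (measurableSet_singleton 1)
      have IH1 := cond_prod_toReal hDm h1
      have h2 : μ[|C] (EE ∩ W1) = μ[|C] EE * μ[|C] W1 :=
        hext2.measure_inter_preimage_eq_mul {1} {1} (measurableSet_singleton 1)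
          (measurableSet_singleton 1)
      have IH2 := cond_prod_toReal hCm h2
      have hs1 : D ∩ E11 = E11 ∩ C ∩ EE := by
        ext ω; simp only [hDdef, Set.mem_inter_iff]; tauto
      have hs2 : C ∩ (EE ∩ W1) = D ∩ W1 := by
        ext ω; simp only [hDdef, Set.mem_inter_iff]; tauto
      have hs3 : D ∩ (E11 ∩ W1) = S1 := by
        ext ω; simp only [hDdef, hS1def, Set.mem_inter_iff]; tauto
      have hs4 : C ∩ EE = D := rfl
      rw [hs3, hs1] at IH1
      rw [hs2, hs4, hCW, ← htdef] at IH2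
      rw [← hq1'] at IH1
      have hfin : (μ S1).toReal = q1 * p1 * t := by
        apply mul_right_cancel₀ (mul_ne_zero (ne_of_gt hdpos) (ne_of_gt hc))
        have expand : (μ S1).toReal * ((μ D).toReal * (μ C).toReal) =
            ((μ S1).toReal * (μ D).toReal) * (μ C).toReal := by ring
        rw [expand]
        calc ((μ S1).toReal * (μ D).toReal) * (μ C).toReal
            = (q1 * (p1 * (μ C).toReal) * (μ (D ∩ W1)).toReal) * (μ C).toReal := by
              rw [IH1]
          _ = (q1 * p1) * ((μ (D ∩ W1)).toReal * (μ C).toReal) * (μ C).toReal := by ring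
          _ = (q1 * p1) * ((μ D).toReal * t) * (μ C).toReal := by rw [IH2]
          _ = q1 * p1 * t * ((μ D).toReal * (μ C).toReal) := by ring
      rw [hfin]
  -- a.e. inclusion of strata into the factual event
  set DYs := {ω | DY2 ω = 1} with hDYdef
  have hDYm : MeasurableSet DYs := hDY2m (measurableSet_singleton 1)
  have hsub0 : ∀ᵐ ω ∂μ, ω ∈ Z ∩ S0 → ω ∈ Z ∩ DYs := by
    filter_upwards [cons1, cons2, cons5] with ω h1 h2 h5
    rintro ⟨hZω, ⟨⟨he1ω, henω⟩, hy2ω⟩⟩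
    have hE1 : E1 ω = 0 := (h1 hZω).trans he1ω
    have hE2 : E2 ω = 1 := (h2 hZω hE1).trans henω
    exact ⟨hZω, (h5 hZω hE1 hE2).trans hy2ω⟩
  have hsub1 : ∀ᵐ ω ∂μ, ω ∈ Z ∩ S1 → ω ∈ Z ∩ DYs := by
    filter_upwards [cons1, cons3, cons4, cons6] with ω h1 h3 h4 h6
    rintro ⟨hZω, ⟨⟨⟨he1ω, hy1ω⟩, heeω⟩, hwω⟩⟩
    have hE1 : E1 ω = 1 := (h1 hZω).trans he1ω
    have hDY1 : DY1 ω = 0 := (h4 hZω hE1).trans hy1ω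
    have hE2 : E2 ω = 1 := (h3 hZω hE1).trans heeω
    exact ⟨hZω, (h6 hZω hE1 hDY1 hE2).trans hwω⟩
  have hdisj : Disjoint (Z ∩ S0) (Z ∩ S1) := by
    rw [Set.disjoint_left]
    rintro ω ⟨_, ⟨⟨h0, _⟩, _⟩⟩ ⟨_, ⟨⟨⟨h1', _⟩, _⟩, _⟩⟩
    have : (0 : ℝ) = 1 := h0 ▸ h1'
    norm_num at this
  have hunion : μ (Z ∩ S0) + μ (Z ∩ S1) ≤ μ (Z ∩ DYs) := by
    rw [← measure_union hdisj (hZm.inter hS1m)]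
    apply measure_mono_ae
    filter_upwards [hsub0, hsub1] with ω h0 h1 hω
    rcases hω with h | h
    exacts [h0 h, h1 h]
  -- independence of Z from the strata
  have hind0 : μ (Z ∩ S0) = μ Z * μ S0 := by
    have hT : MeasurableSet {p : ℝ × ℝ × ℝ × ℝ × ℝ × ℝ | p.1 = 0 ∧ p.2.2.1 = 1 ∧ p.2.2.2.2.1 = 1} := by
      refine MeasurableSet.inter ?_ (MeasurableSet.inter ?_ ?_)
      · exact measurable_fst (measurableSet_singleton 0)
      · exact (measurable_fst.comp (measurable_snd.comp measurable_snd))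
          (measurableSet_singleton 1)
      · exact (measurable_fst.comp (measurable_snd.comp (measurable_snd.comp
          (measurable_snd.comp measurable_snd)))) (measurableSet_singleton 1)
    have hpre : (fun ω => (e1 ω, y1 ω, e2n ω, e2e ω, y2 ω, w ω)) ⁻¹'
        {p : ℝ × ℝ × ℝ × ℝ × ℝ × ℝ | p.1 = 0 ∧ p.2.2.1 = 1 ∧ p.2.2.2.2.1 = 1} = S0 := by
      ext ω
      simp only [hS0def, hE10def, hENdef, hY21def, Set.mem_preimage, Set.mem_setOf_eq,
        Set.mem_inter_iff]
      tauto
    have := hZind _ hT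
    rw [hpre] at this
    exact this
  have hind1 : μ (Z ∩ S1) = μ Z * μ S1 := by
    have hT : MeasurableSet {p : ℝ × ℝ × ℝ × ℝ × ℝ × ℝ |
        p.1 = 1 ∧ p.2.1 = 0 ∧ p.2.2.2.1 = 1 ∧ p.2.2.2.2.2 = 1} := by
      refine MeasurableSet.inter ?_ (MeasurableSet.inter ?_ (MeasurableSet.inter ?_ ?_))
      · exact measurable_fst (measurableSet_singleton 1)
      · exact (measurable_fst.comp measurable_snd) (measurableSet_singleton 0)
      · exact (measurable_fst.comp (measurable_snd.comp (measurable_snd.comp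
          measurable_snd))) (measurableSet_singleton 1)
      · exact (measurable_snd.comp (measurable_snd.comp (measurable_snd.comp
          (measurable_snd.comp measurable_snd)))) (measurableSet_singleton 1)
    have hpre : (fun ω => (e1 ω, y1 ω, e2n ω, e2e ω, y2 ω, w ω)) ⁻¹'
        {p : ℝ × ℝ × ℝ × ℝ × ℝ × ℝ |
          p.1 = 1 ∧ p.2.1 = 0 ∧ p.2.2.2.1 = 1 ∧ p.2.2.2.2.2 = 1} = S1 := by
      ext ω
      simp only [hS1def, hE11def, hCdef, hEEdef, hW1def, Set.mem_preimage, Set.mem_setOf_eq,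
        Set.mem_inter_iff]
      tauto
    have := hZind _ hT
    rw [hpre] at this
    exact this
  -- integral identity
  have hzr : 0 < (μ Z).toReal := ENNReal.toReal_pos hZ0 (measure_ne_top μ _)
  have hint : ∫ ω, DY2 ω ∂(μ[|Z]) = ((μ[|Z]) DYs).toReal := by
    have hDY2eq : DY2 = Set.indicator DYs (fun _ => (1 : ℝ)) := by
      funext ω
      rcases hDY2r ω with h | h
      · have : ω ∉ DYs := by simp [hDYdef, h]
        simp [Set.indicator_of_notMem this, h]
      · have : ω ∈ DYs := by simp [hDYdef, h]
        simp [Set.indicator_of_mem this, h]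
    rw [hDY2eq]
    exact integral_indicator_one hDYm
  have hcondval : ((μ[|Z]) DYs).toReal = (μ (Z ∩ DYs)).toReal / (μ Z).toReal := by
    rw [cond_apply hZm, ENNReal.toReal_mul, ENNReal.toReal_inv, inv_mul_eq_div]
  -- put everything together over the reals
  have hsumr : (μ (Z ∩ S0)).toReal + (μ (Z ∩ S1)).toReal ≤ (μ (Z ∩ DYs)).toReal := by
    rw [← ENNReal.toReal_add (measure_ne_top μ _) (measure_ne_top μ _)]
    exact ENNReal.toReal_mono (measure_ne_top μ _) hunion
  have hi0 : (μ (Z ∩ S0)).toReal = (μ Z).toReal * (μ S0).toReal := by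
    rw [hind0, ENNReal.toReal_mul]
  have hi1 : (μ (Z ∩ S1)).toReal = (μ Z).toReal * (μ S1).toReal := by
    rw [hind1, ENNReal.toReal_mul]
  have hmain : (q0 * p0 + q1 * p1) * t * (μ Z).toReal ≤ (μ (Z ∩ DYs)).toReal := by
    calc (q0 * p0 + q1 * p1) * t * (μ Z).toReal
        = (μ Z).toReal * (q0 * p0 * t) + (μ Z).toReal * (q1 * p1 * t) := by ring
      _ ≤ (μ Z).toReal * (μ S0).toReal + (μ Z).toReal * (μ S1).toReal := by
          gcongr
      _ = (μ (Z ∩ S0)).toReal + (μ (Z ∩ S1)).toReal := by rw [hi0, hi1]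
      _ ≤ (μ (Z ∩ DYs)).toReal := hsumr
  rw [hint, hcondval, le_div_iff₀ hden, le_div_iff₀ hzr]
  linarith [hmain]


/-- Waning strata restriction. -/
theorem waning_strata_restriction
    {Ω : Type*} [MeasurableSpace Ω] (μ : Measure Ω) [IsProbabilityMeasure μ]
    (A E1 E2 DY1 DY2 : Ω → ℝ)
    (E1p : ℝ → Ω → ℝ) (E2p Y1p Y2p Wp : ℝ → ℝ → Ω → ℝ)
    (hAm : Measurable A) (hE1m : Measurable E1) (hE2m : Measurable E2)
    (hDY1m : Measurable DY1) (hDY2m : Measurable DY2)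
    (hE1pm : ∀ a ∈ ({0, 1} : Set ℝ), Measurable (E1p a))
    (hE2pm : ∀ a ∈ ({0, 1} : Set ℝ), ∀ e1 ∈ ({0, 1} : Set ℝ), Measurable (E2p a e1))
    (hY1pm : ∀ a ∈ ({0, 1} : Set ℝ), ∀ e1 ∈ ({0, 1} : Set ℝ), Measurable (Y1p a e1))
    (hY2pm : ∀ a ∈ ({0, 1} : Set ℝ), ∀ e2 ∈ ({0, 1} : Set ℝ), Measurable (Y2p a e2))
    (hWpm : ∀ a ∈ ({0, 1} : Set ℝ), ∀ e1 ∈ ({0, 1} : Set ℝ), Measurable (Wp a e1))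
    (hAr : ∀ ω, A ω = 0 ∨ A ω = 1) (hE1r : ∀ ω, E1 ω = 0 ∨ E1 ω = 1)
    (hE2r : ∀ ω, E2 ω = 0 ∨ E2 ω = 1)
    (hDY1r : ∀ ω, DY1 ω = 0 ∨ DY1 ω = 1) (hDY2r : ∀ ω, DY2 ω = 0 ∨ DY2 ω = 1)
    (hE1pr : ∀ a ∈ ({0, 1} : Set ℝ), ∀ ω, E1p a ω = 0 ∨ E1p a ω = 1)
    (hE2pr : ∀ a ∈ ({0, 1} : Set ℝ), ∀ e1 ∈ ({0, 1} : Set ℝ), ∀ ω,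
      E2p a e1 ω = 0 ∨ E2p a e1 ω = 1)
    (hY1pr : ∀ a ∈ ({0, 1} : Set ℝ), ∀ e1 ∈ ({0, 1} : Set ℝ), ∀ ω,
      Y1p a e1 ω = 0 ∨ Y1p a e1 ω = 1)
    (hY2pr : ∀ a ∈ ({0, 1} : Set ℝ), ∀ e2 ∈ ({0, 1} : Set ℝ), ∀ ω,
      Y2p a e2 ω = 0 ∨ Y2p a e2 ω = 1)
    (hWpr : ∀ a ∈ ({0, 1} : Set ℝ), ∀ e1 ∈ ({0, 1} : Set ℝ), ∀ ω,
      Wp a e1 ω = 0 ∨ Wp a e1 ω = 1)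
    (hmono : ∀ ω, DY1 ω = 1 → DY2 ω = 0)
    -- Consistency
    (hconsE1 : ∀ a ∈ ({0, 1} : Set ℝ), ∀ᵐ ω ∂μ, A ω = a → E1 ω = E1p a ω)
    (hconsY1 : ∀ a ∈ ({0, 1} : Set ℝ), ∀ e1 ∈ ({0, 1} : Set ℝ),
      ∀ᵐ ω ∂μ, A ω = a → E1 ω = e1 → DY1 ω = Y1p a e1 ω)
    (hconsE2 : ∀ a ∈ ({0, 1} : Set ℝ), ∀ e1 ∈ ({0, 1} : Set ℝ),
      ∀ᵐ ω ∂μ, A ω = a → E1 ω = e1 → E2 ω = E2p a e1 ω)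
    (hconsY2 : ∀ a ∈ ({0, 1} : Set ℝ), ∀ e2 ∈ ({0, 1} : Set ℝ),
      ∀ᵐ ω ∂μ, A ω = a → E1 ω = 0 → E2 ω = e2 → DY2 ω = Y2p a e2 ω)
    (hconsW : ∀ a ∈ ({0, 1} : Set ℝ), ∀ e1 ∈ ({0, 1} : Set ℝ),
      ∀ᵐ ω ∂μ, A ω = a → E1 ω = e1 → DY1 ω = 0 → E2 ω = 1 → DY2 ω = Wp a e1 ω)
    -- Exposure necessity
    (hnecY1 : ∀ a ∈ ({0, 1} : Set ℝ), ∀ᵐ ω ∂μ, Y1p a 0 ω = 0)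
    (hnecY2 : ∀ a ∈ ({0, 1} : Set ℝ), ∀ᵐ ω ∂μ, Y2p a 0 ω = 0)
    (hnecE2 : ∀ᵐ ω ∂μ, E2 ω = 0 → DY2 ω = 0)
    -- Exclusion restriction
    (hexcl : ∀ a ∈ ({0, 1} : Set ℝ), ∀ᵐ ω ∂μ, Wp a 1 ω = Y2p a 1 ω ∧ Wp a 0 ω = Y2p a 1 ω)
    -- Treatment exchangeability
    (hexch : IndepFun A (fun ω => ![E1p 0 ω, E1p 1 ω,
      E2p 0 0 ω, E2p 0 1 ω, E2p 1 0 ω, E2p 1 1 ω,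
      Y1p 0 0 ω, Y1p 0 1 ω, Y1p 1 0 ω, Y1p 1 1 ω,
      Y2p 0 0 ω, Y2p 0 1 ω, Y2p 1 0 ω, Y2p 1 1 ω,
      Wp 0 0 ω, Wp 0 1 ω, Wp 1 0 ω, Wp 1 1 ω]) μ)
    -- Positivity
    (hpos : 0 < (μ {ω | A ω = 1}).toReal ∧ (μ {ω | A ω = 1}).toReal < 1)
    -- Exposure exchangeability
    (heeY1 : ∀ a ∈ ({0, 1} : Set ℝ), ∀ e1 ∈ ({0, 1} : Set ℝ), IndepFun (E1p a) (Y1p a e1) μ)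
    (heeY2cond : ∀ a ∈ ({0, 1} : Set ℝ), ∀ e2 ∈ ({0, 1} : Set ℝ), ∀ e ∈ ({0, 1} : Set ℝ),
      IndepFun (E1p a) (Y2p a e2) (μ[|{ω | E2p a 0 ω = e}]))
    (heeE2 : ∀ a ∈ ({0, 1} : Set ℝ), ∀ e2 ∈ ({0, 1} : Set ℝ), IndepFun (E2p a 0) (Y2p a e2) μ)
    -- Extended exposure exchangeability
    (hextee1 : ∀ a ∈ ({0, 1} : Set ℝ), ∀ e ∈ ({0, 1} : Set ℝ),
      IndepFun (E1p a) (Wp a 1) (μ[|{ω | Y1p a 1 ω = 0 ∧ E2p a 1 ω = e}]))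
    (hextee2 : ∀ a ∈ ({0, 1} : Set ℝ),
      IndepFun (E2p a 1) (Wp a 1) (μ[|{ω | Y1p a 1 ω = 0}]))
    (a : ℝ) (ha : a ∈ ({0, 1} : Set ℝ))
    -- Nondegeneracy
    (hE1pos : 0 < (μ {ω | E1p a ω = 1}).toReal)
    (hE1lt : (μ {ω | E1p a ω = 1}).toReal < 1)
    (hE1Y1 : 0 < (μ {ω | E1p a ω = 1 ∧ Y1p a 1 ω = 0}).toReal)
    (q0 q1 p0 p1 : ℝ)
    (hq0 : q0 = ((μ[|{ω | E1p a ω = 0}]) {ω | E2p a 0 ω = 1}).toReal)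
    (hq1 : q1 = ((μ[|{ω | E1p a ω = 1 ∧ Y1p a 1 ω = 0}]) {ω | E2p a 1 ω = 1}).toReal)
    (hp0 : p0 = (μ {ω | E1p a ω = 0}).toReal)
    (hp1 : p1 = (μ {ω | E1p a ω = 1}).toReal)
    (hden : 0 < q0 * p0 + q1 * p1) :
    (μ {ω | Y2p a 1 ω = 1 ∧ Y1p a 1 ω = 0}).toReal ≤
      (∫ ω, DY2 ω ∂(μ[|{ω | A ω = a}])) / (q0 * p0 + q1 * p1) := by
  classical
  have h0m : (0 : ℝ) ∈ ({0, 1} : Set ℝ) := by norm_num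
  have h1m : (1 : ℝ) ∈ ({0, 1} : Set ℝ) := by norm_num
  have ha' := ha
  rw [Set.mem_insert_iff, Set.mem_singleton_iff] at ha'
  -- positivity of the treatment arm
  have hZ0 : μ {ω | A ω = a} ≠ 0 := by
    rcases ha' with rfl | rfl
    · intro h
      have hcover : {ω | A ω = (0:ℝ)} ∪ {ω | A ω = 1} = Set.univ := by
        ext ω; simp only [Set.mem_union, Set.mem_setOf_eq, Set.mem_univ, iff_true]
        exact hAr ω
      have hle : (μ Set.univ : ℝ≥0∞) ≤ μ {ω | A ω = (0:ℝ)} + μ {ω | A ω = 1} := by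
        rw [← hcover]; exact measure_union_le _ _
      rw [measure_univ, h, zero_add] at hle
      have : (1 : ℝ) ≤ (μ {ω | A ω = (1:ℝ)}).toReal := by
        have := ENNReal.toReal_mono (measure_ne_top μ _) hle
        simpa using this
      linarith [hpos.2]
    · intro h
      rw [h] at hpos
      simp at hpos
  -- independence of the treatment event from the potential-outcome tuple
  have hZind : ∀ T : Set (ℝ × ℝ × ℝ × ℝ × ℝ × ℝ), MeasurableSet T →
      μ ({ω | A ω = a} ∩
          (fun ω => (E1p a ω, Y1p a 1 ω, E2p a 0 ω, E2p a 1 ω, Y2p a 1 ω, Wp a 1 ω)) ⁻¹' T) =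
        μ {ω | A ω = a} *
          μ ((fun ω => (E1p a ω, Y1p a 1 ω, E2p a 0 ω, E2p a 1 ω, Y2p a 1 ω, Wp a 1 ω)) ⁻¹' T) := by
    intro T hT
    rcases ha' with rfl | rfl
    · have hphi : Measurable (fun v : Fin 18 → ℝ => (v 0, v 7, v 2, v 3, v 11, v 15)) :=
        (measurable_pi_apply 0).prodMk ((measurable_pi_apply 7).prodMk
          ((measurable_pi_apply 2).prodMk ((measurable_pi_apply 3).prodMk
            ((measurable_pi_apply 11).prodMk (measurable_pi_apply 15)))))
      have hcomp := hexch.comp measurable_id hphi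
      exact hcomp.measure_inter_preimage_eq_mul {(0:ℝ)} T (measurableSet_singleton 0) hT
    · have hphi : Measurable (fun v : Fin 18 → ℝ => (v 1, v 9, v 4, v 5, v 13, v 17)) :=
        (measurable_pi_apply 1).prodMk ((measurable_pi_apply 9).prodMk
          ((measurable_pi_apply 4).prodMk ((measurable_pi_apply 5).prodMk
            ((measurable_pi_apply 13).prodMk (measurable_pi_apply 17)))))
      have hcomp := hexch.comp measurable_id hphi
      exact hcomp.measure_inter_preimage_eq_mul {(1:ℝ)} T (measurableSet_singleton 1) hT
  exact waning_aux μ E1 E2 DY1 DY2 (E1p a) (Y1p a 1) (E2p a 0) (E2p a 1) (Y2p a 1) (Wp a 1)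
    hDY2m (hE1pm a ha) (hY1pm a ha 1 h1m) (hE2pm a ha 0 h0m) (hE2pm a ha 1 h1m)
    (hY2pm a ha 1 h1m) (hWpm a ha 1 h1m) hDY2r (hE1pr a ha)
    {ω | A ω = a} (hAm (measurableSet_singleton a)) hZ0 hZind
    (hconsE1 a ha)
    ((hconsE2 a ha 0 h0m).mono fun ω h hZ hE1 => h hZ hE1)
    ((hconsE2 a ha 1 h1m).mono fun ω h hZ hE1 => h hZ hE1)
    ((hconsY1 a ha 1 h1m).mono fun ω h hZ hE1 => h hZ hE1)
    (hconsY2 a ha 1 h1m)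
    (hconsW a ha 1 h1m)
    ((hexcl a ha).mono fun ω h => h.1)
    (heeY1 a ha 1 h1m)
    (heeY2cond a ha 1 h1m 1 h1m)
    (heeE2 a ha 1 h1m)
    (hextee1 a ha 1 h1m)
    (hextee2 a ha)
    hE1pos hE1lt hE1Y1 q0 q1 p0 p1 hq0 hq1 hp0 hp1 hden
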